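/- arXiv:2602.20642 — 3 statements merged into one kernel-verified Lean document; each statement's English description precedes it below -/
import Mathlib

section
/- The function $\mathcal{U}(x_1,\ldots,x_n) = -2\sum_{1\le i<j\le n}\log(x_j-x_i)$, defined on the chamber $\{x_1<\cdots<x_n\}\subset\mathbb{R}^n$, satisfies for each $j\in\{1,\ldots,n\}$ the semi-classical BPZ equation $(\partial_j\mathcal{U})^2 - \sum_{\ell\neq j}\left(\frac{4}{x_\ell-x_j}\partial_\ell\mathcal{U} + \frac{12}{(x_\ell-x_j)^2}\right) = 0$. -/
open Finset

lemma bpz_fderiv (n : ℕ) (x : Fin n → ℝ) (hx : StrictMono x) (k : Fin n) :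
    fderiv ℝ (fun y : Fin n → ℝ => -2 * ∑ p ∈ Finset.univ.filter (fun p : Fin n × Fin n => p.1 < p.2),
        Real.log (y p.2 - y p.1)) x (Pi.single k 1)
      = -2 * ∑ p ∈ Finset.univ.filter (fun p : Fin n × Fin n => p.1 < p.2),
          (x p.2 - x p.1)⁻¹ * ((if p.2 = k then (1:ℝ) else 0) - (if p.1 = k then 1 else 0)) := by
  set S := Finset.univ.filter (fun p : Fin n × Fin n => p.1 < p.2) with hS
  have hderiv : HasFDerivAt (fun y : Fin n → ℝ => -2 * ∑ p ∈ S, Real.log (y p.2 - y p.1))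
      ((-2 : ℝ) • ∑ p ∈ S, (x p.2 - x p.1)⁻¹ •
        (((ContinuousLinearMap.proj p.2 : (Fin n → ℝ) →L[ℝ] ℝ) - ContinuousLinearMap.proj p.1))) x := by
    apply HasFDerivAt.const_mul
    apply HasFDerivAt.fun_sum
    intro p hp
    have hp' : p.1 < p.2 := by simpa [hS] using hp
    have hpos : 0 < x p.2 - x p.1 := sub_pos.2 (hx hp')
    have h1 : HasFDerivAt (fun y : Fin n → ℝ => y p.2 - y p.1)
        (((ContinuousLinearMap.proj p.2 : (Fin n → ℝ) →L[ℝ] ℝ) - ContinuousLinearMap.proj p.1)) x :=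
      (((ContinuousLinearMap.proj p.2 : (Fin n → ℝ) →L[ℝ] ℝ) - ContinuousLinearMap.proj p.1)).hasFDerivAt
    exact (Real.hasDerivAt_log hpos.ne').comp_hasFDerivAt x h1
  rw [hderiv.fderiv]
  simp [ContinuousLinearMap.sum_apply, Pi.single_apply, mul_comm]


lemma bpz_pairsum (n : ℕ) (x : Fin n → ℝ) (k : Fin n) :
    ∑ p ∈ Finset.univ.filter (fun p : Fin n × Fin n => p.1 < p.2),
        (x p.2 - x p.1)⁻¹ * ((if p.2 = k then (1:ℝ) else 0) - (if p.1 = k then 1 else 0))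
      = ∑ l ∈ Finset.univ.filter (fun l : Fin n => l ≠ k), -(x l - x k)⁻¹ := by
  rw [← Finset.sum_filter_of_ne (p := fun p : Fin n × Fin n => p.1 = k ∨ p.2 = k)
    (by intro p hp hne
        by_contra h
        push_neg at h
        simp [h.1, h.2] at hne)]
  rw [Finset.filter_filter]
  refine Finset.sum_nbij' (fun p => if p.1 = k then p.2 else p.1)
    (fun l => if l < k then (l, k) else (k, l)) ?_ ?_ ?_ ?_ ?_
  · intro p hp
    simp only [Finset.mem_filter, Finset.mem_univ, true_and] at hp ⊢
    rcases hp.2 with h | h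
    · rw [if_pos h]
      have h2 : k < p.2 := by have := hp.1; rwa [h] at this
      exact h2.ne'
    · have hne : p.1 ≠ k := by have := hp.1; rw [h] at this; exact this.ne
      rw [if_neg hne]; exact hne
  · intro l hl
    simp only [Finset.mem_filter, Finset.mem_univ, true_and] at hl ⊢
    rcases lt_or_gt_of_ne hl with h | h
    · rw [if_pos h]; exact ⟨h, Or.inr rfl⟩
    · rw [if_neg (not_lt.2 h.le)]; exact ⟨h, Or.inl rfl⟩
  · intro p hp
    simp only [Finset.mem_filter, Finset.mem_univ, true_and] at hp
    rcases hp.2 with h | h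
    · have h2 : k < p.2 := by have := hp.1; rwa [h] at this
      rw [if_pos h, if_neg (not_lt.2 h2.le)]
      exact Prod.ext h.symm rfl
    · have hlt : p.1 < k := by have := hp.1; rwa [h] at this
      rw [if_neg hlt.ne, if_pos hlt]
      exact Prod.ext rfl h.symm
  · intro l hl
    simp only [Finset.mem_filter, Finset.mem_univ, true_and] at hl
    rcases lt_or_gt_of_ne hl with h | h
    · rw [if_pos h]; rw [if_neg h.ne]
    · rw [if_neg (not_lt.2 h.le)]; rw [if_pos rfl]
  · intro p hp
    simp only [Finset.mem_filter, Finset.mem_univ, true_and] at hp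
    rcases hp.2 with h | h
    · have h2 : k < p.2 := by have := hp.1; rwa [h] at this
      simp [h, if_neg h2.ne']
    · have hlt : p.1 < k := by have := hp.1; rwa [h] at this
      simp [h, if_neg hlt.ne]
      rw [show x k - x p.1 = -(x p.1 - x k) by ring, inv_neg]


lemma bpz_algebra (n : ℕ) (x : Fin n → ℝ) (hx : StrictMono x) (j : Fin n) :
    (2 * ∑ l ∈ Finset.univ.filter (fun l : Fin n => l ≠ j), (x l - x j)⁻¹) ^ 2
      - ∑ l ∈ Finset.univ.filter (fun l : Fin n => l ≠ j),
          (4 / (x l - x j) * (2 * ∑ m ∈ Finset.univ.filter (fun m : Fin n => m ≠ l), (x m - x l)⁻¹)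
            + 12 / (x l - x j) ^ 2) = 0 := by
  simp only [Finset.filter_ne']
  set E := Finset.univ.erase j with hE
  set a : Fin n → ℝ := fun l => (x l - x j)⁻¹ with ha
  have hne : ∀ l m : Fin n, l ≠ m → x m - x l ≠ 0 := fun l m h =>
    sub_ne_zero.2 (fun he => h (hx.injective he.symm))
  have hmem : ∀ l ∈ E, l ≠ j := fun l hl => (Finset.mem_erase.1 hl).1
  -- inner sum rewrite
  have hinner : ∀ l ∈ E, ∑ m ∈ Finset.univ.erase l, (x m - x l)⁻¹
      = (∑ m ∈ E, (x m - x l)⁻¹) - a l := by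
    intro l hl
    rw [Finset.sum_erase _ (by rw [sub_self, inv_zero]),
      Finset.sum_erase_eq_sub (Finset.mem_univ j)]
    rw [show x j - x l = -(x l - x j) by ring, inv_neg, ha, sub_neg_eq_add]
    ring
  set P := ∑ l ∈ E, a l with hP
  set Q := ∑ l ∈ E, a l ^ 2 with hQ
  set B := ∑ l ∈ E, ∑ m ∈ E, a l * (x m - x l)⁻¹ with hB
  have hsplit : ∑ l ∈ E, (4 / (x l - x j) * (2 * ∑ m ∈ Finset.univ.erase l, (x m - x l)⁻¹)
      + 12 / (x l - x j) ^ 2) = 8 * B + 4 * Q := by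
    rw [hB, hQ, Finset.mul_sum, Finset.mul_sum, ← Finset.sum_add_distrib]
    refine Finset.sum_congr rfl (fun l hl => ?_)
    rw [hinner l hl, ← Finset.mul_sum, div_eq_mul_inv, div_eq_mul_inv, ← inv_pow]
    simp only [ha]
    ring
  have hsym : B + B = P ^ 2 - Q := by
    have hB2 : B = ∑ l ∈ E, ∑ m ∈ E, a m * (x l - x m)⁻¹ := by
      rw [hB]; exact Finset.sum_comm
    have : B + B = ∑ l ∈ E, ∑ m ∈ E, (a l * (x m - x l)⁻¹ + a m * (x l - x m)⁻¹) := by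
      rw [congrArg₂ HAdd.hAdd hB hB2, ← Finset.sum_add_distrib]
      exact Finset.sum_congr rfl (fun l _ => by rw [← Finset.sum_add_distrib])
    rw [this]
    have hcell : ∀ l ∈ E, ∀ m ∈ E, a l * (x m - x l)⁻¹ + a m * (x l - x m)⁻¹
        = a l * a m - (if l = m then a l * a m else 0) := by
      intro l hl m hm
      by_cases h : l = m
      · subst h
        simp [sub_self]
      · rw [if_neg h, sub_zero, ha]
        have h1 : x m - x l ≠ 0 := hne l m h
        have h2 : x l - x m ≠ 0 := hne m l (Ne.symm h)
        have h3 : x l - x j ≠ 0 := hne j l (Ne.symm (hmem l hl))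
        have h4 : x m - x j ≠ 0 := hne j m (Ne.symm (hmem m hm))
        field_simp
        ring
    rw [Finset.sum_congr rfl (fun l hl => Finset.sum_congr rfl (fun m hm => hcell l hl m hm))]
    have : ∀ l ∈ E, ∑ m ∈ E, (a l * a m - (if l = m then a l * a m else 0))
        = a l * P - a l ^ 2 := by
      intro l hl
      rw [Finset.sum_sub_distrib, ← Finset.mul_sum, Finset.sum_ite_eq E l (fun m => a l * a m),
        if_pos hl, ← hP]
      ring
    rw [Finset.sum_congr rfl this, Finset.sum_sub_distrib, ← Finset.sum_mul, ← hP, ← hQ]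
    ring
  rw [hsplit]
  linear_combination (-4 : ℝ) * hsym

/-- The semi-classical chordal BPZ equations for
`𝒰(x) = -2 ∑_{i<j} log (x_j - x_i)` on the chamber `{x_1 < ⋯ < x_n}`. -/
theorem semiclassical_chordal_BPZ (n : ℕ) (hn : 1 ≤ n)
    (U : (Fin n → ℝ) → ℝ)
    (hU : ∀ y : Fin n → ℝ,
      U y = -2 * ∑ p ∈ Finset.univ.filter (fun p : Fin n × Fin n => p.1 < p.2),
        Real.log (y p.2 - y p.1))
    (x : Fin n → ℝ) (hx : StrictMono x) (j : Fin n) :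
    (fderiv ℝ U x (Pi.single j 1)) ^ 2
      - ∑ l ∈ Finset.univ.filter (fun l : Fin n => l ≠ j),
          (4 / (x l - x j) * fderiv ℝ U x (Pi.single l 1) + 12 / (x l - x j) ^ 2) = 0 := by
  have hUeq : U = fun y : Fin n → ℝ => -2 * ∑ p ∈ Finset.univ.filter
      (fun p : Fin n × Fin n => p.1 < p.2), Real.log (y p.2 - y p.1) := funext hU
  have hD : ∀ k : Fin n, fderiv ℝ U x (Pi.single k 1)
      = 2 * ∑ l ∈ Finset.univ.filter (fun l : Fin n => l ≠ k), (x l - x k)⁻¹ := by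
    intro k
    rw [hUeq, bpz_fderiv n x hx k, bpz_pairsum n x k, Finset.sum_neg_distrib]
    ring
  simp only [hD]
  exact bpz_algebra n x hx j
end

section
/- The function $\mathcal{V}(\theta_1,\ldots,\theta_n) = -2\sum_{1\le i<j\le n}\log\sin\left(\frac{\theta_j-\theta_i}{2}\right) - \mu\sum_{j=1}^n\theta_j$, defined on $\{\theta_1<\cdots<\theta_n<\theta_1+2\pi\}$, satisfies for each $j$ the semi-classical radial BPZ equation $(\partial_j\mathcal{V})^2 - \sum_{\ell\neq j}\left(2\cot\left(\frac{\theta_\ell-\theta_j}{2}\right)\partial_\ell\mathcal{V} + \frac{3}{\sin^2\left(\frac{\theta_\ell-\theta_j}{2}\right)}\right) = \mu^2 + 1 - n^2$. -/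
lemma my_one_add_cot_sq {x : ℝ} (hx : Real.sin x ≠ 0) :
    1 / Real.sin x ^ 2 = 1 + Real.cot x ^ 2 := by
  have h := Real.sin_sq_add_cos_sq x
  rw [Real.cot_eq_cos_div_sin]
  field_simp
  linarith [h]

lemma my_cot_id {a b : ℝ} (ha : Real.sin a ≠ 0) (hb : Real.sin b ≠ 0)
    (hab : Real.sin (b - a) ≠ 0) :
    (Real.cot a - Real.cot b) * Real.cot (b - a) = Real.cot a * Real.cot b + 1 := by
  rw [Real.sin_sub] at hab
  simp only [Real.cot_eq_cos_div_sin, Real.sin_sub, Real.cos_sub]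
  have h2 := Real.sin_sq_add_cos_sq a
  have h3 := Real.sin_sq_add_cos_sq b
  have hab' : Real.cos a * Real.sin b - Real.sin a * Real.cos b ≠ 0 := by
    intro h; apply hab; linarith
  field_simp

noncomputable abbrev prj (n : ℕ) (i : Fin n) : (Fin n → ℝ) →L[ℝ] ℝ :=
  ContinuousLinearMap.proj i

lemma my_cot_neg (x : ℝ) : Real.cot (-x) = -Real.cot x := by
  simp [Real.cot_eq_cos_div_sin, div_neg, neg_div]

lemma pair_hasFDerivAt (n : ℕ) (θ : Fin n → ℝ) (p : Fin n × Fin n)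
    (hs : Real.sin ((θ p.2 - θ p.1)/2) ≠ 0) :
    HasFDerivAt (fun y : Fin n → ℝ => Real.log (Real.sin ((y p.2 - y p.1)/2)))
      ((Real.cot ((θ p.2 - θ p.1)/2) / 2) • (prj n p.2 - prj n p.1)) θ := by
  have h1 : HasFDerivAt (fun y : Fin n → ℝ => (y p.2 - y p.1)/2)
      ((1/2 : ℝ) • (prj n p.2 - prj n p.1)) θ := by
    have h2 := ((1/2 : ℝ) • (prj n p.2 - prj n p.1)).hasFDerivAt (x := θ)
    have he : ⇑((1/2 : ℝ) • (prj n p.2 - prj n p.1)) = fun y : Fin n → ℝ => (y p.2 - y p.1)/2 := by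
      ext y; simp; ring
    rwa [he] at h2
  have h3 : HasDerivAt (fun u => Real.log (Real.sin u))
      (Real.cot ((θ p.2 - θ p.1)/2)) ((θ p.2 - θ p.1)/2) := by
    have := (Real.hasDerivAt_log hs).comp _ (Real.hasDerivAt_sin ((θ p.2 - θ p.1)/2))
    have e : Real.cot ((θ p.2 - θ p.1)/2) = (Real.sin ((θ p.2 - θ p.1) / 2))⁻¹ * Real.cos ((θ p.2 - θ p.1) / 2) := by
      rw [Real.cot_eq_cos_div_sin]; ring
    rw [e]; exact this
  have h4 := h3.comp_hasFDerivAt θ h1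
  have e : (Real.cot ((θ p.2 - θ p.1)/2) / 2) • (prj n p.2 - prj n p.1)
      = Real.cot ((θ p.2 - θ p.1)/2) • (1/2 : ℝ) • (prj n p.2 - prj n p.1) := by
    rw [smul_smul]
    congr 1
    ring
  rw [e]; exact h4

lemma deriv_eval (n : ℕ) (μ : ℝ) (V : (Fin n → ℝ) → ℝ)
    (hV : ∀ y : Fin n → ℝ,
      V y = -2 * (∑ p ∈ Finset.univ.filter (fun p : Fin n × Fin n => p.1 < p.2),
          Real.log (Real.sin ((y p.2 - y p.1) / 2))) - μ * ∑ j, y j)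
    (θ : Fin n → ℝ)
    (hsin : ∀ p : Fin n × Fin n, p.1 < p.2 → Real.sin ((θ p.2 - θ p.1)/2) ≠ 0)
    (l : Fin n) :
    fderiv ℝ V θ (Pi.single l 1)
      = (∑ m ∈ Finset.univ.filter (fun m : Fin n => m ≠ l), Real.cot ((θ m - θ l)/2)) - μ := by
  have hVF : V = fun y : Fin n → ℝ =>
      -2 * (∑ p ∈ Finset.univ.filter (fun p : Fin n × Fin n => p.1 < p.2),
          Real.log (Real.sin ((y p.2 - y p.1) / 2))) - μ * ∑ j, y j := funext hV
  set P := Finset.univ.filter (fun p : Fin n × Fin n => p.1 < p.2) with hP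
  have hsum : HasFDerivAt
      (fun y : Fin n → ℝ => ∑ p ∈ P, Real.log (Real.sin ((y p.2 - y p.1) / 2)))
      (∑ p ∈ P, (Real.cot ((θ p.2 - θ p.1)/2) / 2) • (prj n p.2 - prj n p.1)) θ := by
    apply HasFDerivAt.fun_sum
    intro p hp
    exact pair_hasFDerivAt n θ p (hsin p (by simpa [hP] using hp))
  have hlin : HasFDerivAt (fun y : Fin n → ℝ => μ * ∑ j, y j)
      (μ • ∑ m : Fin n, prj n m) θ := by
    have h2 := ((μ : ℝ) • ∑ m : Fin n, prj n m).hasFDerivAt (x := θ)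
    have he : ⇑((μ : ℝ) • ∑ m : Fin n, prj n m) = fun y : Fin n → ℝ => μ * ∑ j, y j := by
      ext y; simp
    rwa [he] at h2
  have hD := (hsum.const_mul (-2 : ℝ)).fun_sub hlin
  rw [hVF]
  have heq : (fun y : Fin n → ℝ =>
      -2 * (∑ p ∈ P, Real.log (Real.sin ((y p.2 - y p.1) / 2))) - μ * ∑ j, y j)
      = fun y : Fin n → ℝ =>
      (-2 : ℝ) * (∑ p ∈ P, Real.log (Real.sin ((y p.2 - y p.1) / 2))) - μ * ∑ j, y j := rfl
  rw [hD.fderiv]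
  -- evaluate
  simp only [ContinuousLinearMap.sub_apply, ContinuousLinearMap.smul_apply,
    ContinuousLinearMap.sum_apply, ContinuousLinearMap.proj_apply, smul_eq_mul]
  have hone : ∑ m : Fin n, (Pi.single l 1 : Fin n → ℝ) m = 1 := by
    simp [Pi.single_apply]
  rw [hone]
  have key : ∑ p ∈ P, Real.cot ((θ p.2 - θ p.1)/2) / 2 * ((Pi.single l 1 : Fin n → ℝ) p.2 - (Pi.single l 1 : Fin n → ℝ) p.1)
      = -(1/2) * ∑ m ∈ Finset.univ.filter (fun m : Fin n => m ≠ l), Real.cot ((θ m - θ l)/2) := by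
    rw [hP, Finset.sum_filter, Fintype.sum_prod_type]
    have step1 : ∀ i k : Fin n,
        (if i < k then Real.cot ((θ k - θ i)/2) / 2 * ((Pi.single l 1 : Fin n → ℝ) k - (Pi.single l 1 : Fin n → ℝ) i) else 0)
        = (if k = l then (if i < k then Real.cot ((θ k - θ i)/2) / 2 else 0) else 0)
          - (if i = l then (if i < k then Real.cot ((θ k - θ i)/2) / 2 else 0) else 0) := by
      intro i k
      simp only [Pi.single_apply]
      split_ifs <;> ring
    simp only [step1]
    simp only [Finset.sum_sub_distrib, Finset.sum_ite_eq' Finset.univ]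
    simp only [Finset.mem_univ, if_true]
    have step2 : ∀ i : Fin n, (∑ k : Fin n, if i = l then (if i < k then Real.cot ((θ k - θ i)/2) / 2 else 0) else 0)
        = if i = l then (∑ k : Fin n, if l < k then Real.cot ((θ k - θ l)/2) / 2 else 0) else 0 := by
      intro i
      split_ifs with h
      · subst h; rfl
      · simp [h]
    simp only [step2]
    rw [Finset.sum_ite_eq' Finset.univ]
    simp only [Finset.mem_univ, if_true]
    rw [Finset.sum_filter, Finset.mul_sum, ← Finset.sum_filter, Finset.sum_filter,
      ← Finset.sum_sub_distrib]
    apply Finset.sum_congr rfl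
    intro m _
    rcases lt_trichotomy m l with h | h | h
    · have h1 : ¬ l < m := not_lt.mpr h.le
      have h2 : m ≠ l := ne_of_lt h
      have h3 : (θ l - θ m)/2 = -((θ m - θ l)/2) := by ring
      simp only [if_pos h, if_neg h1, if_pos h2, h3, my_cot_neg]
      ring
    · subst h
      simp [lt_irrefl]
    · have h1 : ¬ m < l := not_lt.mpr h.le
      have h2 : m ≠ l := ne_of_gt h
      simp only [if_neg h1, if_pos h, if_pos h2]
      ring
  rw [key]
  ring

/-- The semi-classical radial BPZ equations for
`𝒱(θ) = -2 ∑_{i<j} log sin((θ_j - θ_i)/2) - μ ∑_j θ_j` on the chamber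
`{θ_1 < ⋯ < θ_n < θ_1 + 2π}`. -/
theorem semiclassical_radial_BPZ (n : ℕ) (hn : 1 ≤ n) (μ : ℝ)
    (V : (Fin n → ℝ) → ℝ)
    (hV : ∀ y : Fin n → ℝ,
      V y = -2 * (∑ p ∈ Finset.univ.filter (fun p : Fin n × Fin n => p.1 < p.2),
          Real.log (Real.sin ((y p.2 - y p.1) / 2))) - μ * ∑ j, y j)
    (θ : Fin n → ℝ) (hθ : StrictMono θ)
    (hθ2π : ∀ i j : Fin n, θ j - θ i < 2 * Real.pi)
    (j : Fin n) :
    (fderiv ℝ V θ (Pi.single j 1)) ^ 2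
      - ∑ l ∈ Finset.univ.filter (fun l : Fin n => l ≠ j),
          (2 * Real.cot ((θ l - θ j) / 2) * fderiv ℝ V θ (Pi.single l 1)
            + 3 / (Real.sin ((θ l - θ j) / 2)) ^ 2)
      = μ ^ 2 + 1 - (n : ℝ) ^ 2 := by
  classical
  have hsin : ∀ i k : Fin n, i ≠ k → Real.sin ((θ k - θ i)/2) ≠ 0 := by
    intro i k hik
    rcases lt_or_gt_of_ne hik with h | h
    · have h0 : 0 < (θ k - θ i)/2 := by have := hθ h; linarith
      have h1 : (θ k - θ i)/2 < Real.pi := by have := hθ2π i k; linarith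
      exact ne_of_gt (Real.sin_pos_of_pos_of_lt_pi h0 h1)
    · have h0 : 0 < (θ i - θ k)/2 := by have := hθ h; linarith
      have h1 : (θ i - θ k)/2 < Real.pi := by have := hθ2π k i; linarith
      have h2 : (θ k - θ i)/2 = -((θ i - θ k)/2) := by ring
      rw [h2, Real.sin_neg]
      simpa using ne_of_gt (Real.sin_pos_of_pos_of_lt_pi h0 h1)
  have hsinP : ∀ p : Fin n × Fin n, p.1 < p.2 → Real.sin ((θ p.2 - θ p.1)/2) ≠ 0 :=
    fun p hp => hsin p.1 p.2 (ne_of_lt hp)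
  have hfd := deriv_eval n μ V hV θ hsinP
  simp only [hfd]
  set s := Finset.univ.filter (fun l : Fin n => l ≠ j) with hs
  have hs_erase : s = Finset.univ.erase j := by rw [hs, Finset.filter_ne']
  have hs_card_nat : s.card = n - 1 := by
    rw [hs_erase, Finset.card_erase_of_mem (Finset.mem_univ j), Finset.card_univ,
      Fintype.card_fin]
  have hs_card : (s.card : ℝ) = (n : ℝ) - 1 := by
    rw [hs_card_nat, Nat.cast_sub hn, Nat.cast_one]
  -- termwise rewriting of the subtracted sum
  have hterm : ∀ l ∈ s,
      (2 * Real.cot ((θ l - θ j) / 2)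
          * ((∑ m ∈ Finset.univ.filter (fun m : Fin n => m ≠ l), Real.cot ((θ m - θ l)/2)) - μ)
        + 3 / (Real.sin ((θ l - θ j) / 2)) ^ 2)
      = (Real.cot ((θ l - θ j)/2)^2 - 2*μ*Real.cot ((θ l - θ j)/2) + 3)
        + 2 * (Real.cot ((θ l - θ j)/2) * ∑ m ∈ s.erase l, Real.cot ((θ m - θ l)/2)) := by
    intro l hl
    have hlj : l ≠ j := by
      rw [hs, Finset.mem_filter] at hl; exact hl.2
    have hinner : (∑ m ∈ Finset.univ.filter (fun m : Fin n => m ≠ l), Real.cot ((θ m - θ l)/2))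
        = -Real.cot ((θ l - θ j)/2) + ∑ m ∈ s.erase l, Real.cot ((θ m - θ l)/2) := by
      rw [Finset.filter_ne']
      have hjmem : j ∈ Finset.univ.erase l :=
        Finset.mem_erase.mpr ⟨Ne.symm hlj, Finset.mem_univ j⟩
      rw [← Finset.add_sum_erase _ _ hjmem]
      have h4 : (θ j - θ l)/2 = -((θ l - θ j)/2) := by ring
      have h5 : (Finset.univ.erase l).erase j = s.erase l := by
        ext x
        simp only [Finset.mem_erase, hs_erase, Finset.mem_univ, and_true]
        tauto
      rw [h4, my_cot_neg, h5]
    have hsq : 3 / (Real.sin ((θ l - θ j) / 2)) ^ 2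
        = 3 * (1 + Real.cot ((θ l - θ j)/2) ^ 2) := by
      have := my_one_add_cot_sq (hsin j l (Ne.symm hlj))
      rw [div_eq_mul_one_div, this]
    rw [hinner, hsq]
    ring
  rw [Finset.sum_congr rfl hterm]
  -- notation
  have hgoal : ∑ l ∈ s,
      ((Real.cot ((θ l - θ j)/2)^2 - 2*μ*Real.cot ((θ l - θ j)/2) + 3)
        + 2 * (Real.cot ((θ l - θ j)/2) * ∑ m ∈ s.erase l, Real.cot ((θ m - θ l)/2)))
      = (∑ l ∈ s, Real.cot ((θ l - θ j)/2)^2)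
        - 2*μ*(∑ l ∈ s, Real.cot ((θ l - θ j)/2)) + 3*((n:ℝ)-1)
        + 2 * (∑ l ∈ s, Real.cot ((θ l - θ j)/2) * ∑ m ∈ s.erase l, Real.cot ((θ m - θ l)/2)) := by
    rw [Finset.sum_add_distrib, Finset.sum_add_distrib, Finset.sum_sub_distrib,
      ← Finset.mul_sum, ← Finset.mul_sum, Finset.sum_const, nsmul_eq_mul, hs_card]
    ring
  rw [hgoal]
  -- claim A
  have hA : (∑ l ∈ s, Real.cot ((θ l - θ j)/2)) ^ 2
      = (∑ l ∈ s, Real.cot ((θ l - θ j)/2)^2)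
        + ∑ l ∈ s, Real.cot ((θ l - θ j)/2) * ∑ m ∈ s.erase l, Real.cot ((θ m - θ j)/2) := by
    rw [sq, Finset.sum_mul, ← Finset.sum_add_distrib]
    apply Finset.sum_congr rfl
    intro l hl
    rw [← Finset.add_sum_erase s _ hl]
    ring
  -- pointwise cotangent identity
  have hid : ∀ l ∈ s, ∀ m ∈ s.erase l,
      Real.cot ((θ l - θ j)/2) * Real.cot ((θ m - θ j)/2)
        - (Real.cot ((θ l - θ j)/2) - Real.cot ((θ m - θ j)/2)) * Real.cot ((θ m - θ l)/2)
      = -1 := by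
    intro l hl m hm
    have hlj : l ≠ j := by rw [hs, Finset.mem_filter] at hl; exact hl.2
    have hml : m ≠ l := (Finset.mem_erase.mp hm).1
    have hmj : m ≠ j := by
      have := (Finset.mem_erase.mp hm).2
      rw [hs, Finset.mem_filter] at this; exact this.2
    have ha := hsin j l (Ne.symm hlj)
    have hb := hsin j m (Ne.symm hmj)
    have hba : (θ m - θ j)/2 - (θ l - θ j)/2 = (θ m - θ l)/2 := by ring
    have hab : Real.sin ((θ m - θ j)/2 - (θ l - θ j)/2) ≠ 0 := by
      rw [hba]; exact hsin l m (Ne.symm hml)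
    have := my_cot_id ha hb hab
    rw [hba] at this
    linarith
  -- the swap identity
  have hmem : ∀ x y : Fin n, x ∈ s ∧ y ∈ s.erase x ↔ x ∈ s.erase y ∧ y ∈ s := by
    intro x y
    simp only [Finset.mem_erase, hs, Finset.mem_filter, Finset.mem_univ, true_and]
    constructor
    · rintro ⟨h1, h2, h3⟩; exact ⟨⟨Ne.symm h2, h1⟩, h3⟩
    · rintro ⟨⟨h1, h2⟩, h3⟩; exact ⟨h2, Ne.symm h1, h3⟩
  have hswap : ∑ l ∈ s, ∑ m ∈ s.erase l, Real.cot ((θ m - θ j)/2) * Real.cot ((θ m - θ l)/2)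
      = -∑ l ∈ s, ∑ m ∈ s.erase l, Real.cot ((θ l - θ j)/2) * Real.cot ((θ m - θ l)/2) := by
    rw [Finset.sum_comm' hmem]
    rw [← Finset.sum_neg_distrib]
    apply Finset.sum_congr rfl
    intro l _
    rw [← Finset.sum_neg_distrib]
    apply Finset.sum_congr rfl
    intro m _
    have h4 : (θ l - θ m)/2 = -((θ m - θ l)/2) := by ring
    rw [h4, my_cot_neg]
    ring
  -- counting
  have hcount : ∑ l ∈ s, ∑ m ∈ s.erase l, (-1 : ℝ) = -(((n:ℝ)-1) * ((n:ℝ)-2)) := by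
    have hpt : ∀ l ∈ s, ∑ m ∈ s.erase l, (-1 : ℝ) = -((n:ℝ)-2) := by
      intro l hl
      rw [Finset.sum_const, nsmul_eq_mul, Finset.card_erase_of_mem hl, hs_card_nat]
      have h2n : 2 ≤ n := by
        have h1 : s.Nonempty := ⟨l, hl⟩
        have := Finset.card_pos.mpr h1
        omega
      have : ((n - 1 - 1 : ℕ) : ℝ) = (n:ℝ) - 2 := by
        have : n - 1 - 1 = n - 2 := by omega
        rw [this, Nat.cast_sub h2n]; norm_num
      rw [this]; ring
    rw [Finset.sum_congr rfl hpt, Finset.sum_const, nsmul_eq_mul, hs_card]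
    ring
  -- pair identity
  have hpair : (∑ l ∈ s, Real.cot ((θ l - θ j)/2) * ∑ m ∈ s.erase l, Real.cot ((θ m - θ j)/2))
      - 2 * (∑ l ∈ s, Real.cot ((θ l - θ j)/2) * ∑ m ∈ s.erase l, Real.cot ((θ m - θ l)/2))
      = -(((n:ℝ)-1) * ((n:ℝ)-2)) := by
    have hd1 : (∑ l ∈ s, Real.cot ((θ l - θ j)/2) * ∑ m ∈ s.erase l, Real.cot ((θ m - θ j)/2))
        = ∑ l ∈ s, ∑ m ∈ s.erase l, Real.cot ((θ l - θ j)/2) * Real.cot ((θ m - θ j)/2) :=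
      Finset.sum_congr rfl (fun l _ => Finset.mul_sum _ _ _)
    have hd2 : (∑ l ∈ s, Real.cot ((θ l - θ j)/2) * ∑ m ∈ s.erase l, Real.cot ((θ m - θ l)/2))
        = ∑ l ∈ s, ∑ m ∈ s.erase l, Real.cot ((θ l - θ j)/2) * Real.cot ((θ m - θ l)/2) :=
      Finset.sum_congr rfl (fun l _ => Finset.mul_sum _ _ _)
    rw [hd1, hd2]
    have h2x : (2 : ℝ) * (∑ l ∈ s, ∑ m ∈ s.erase l, Real.cot ((θ l - θ j)/2) * Real.cot ((θ m - θ l)/2))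
        = (∑ l ∈ s, ∑ m ∈ s.erase l, Real.cot ((θ l - θ j)/2) * Real.cot ((θ m - θ l)/2))
          - (∑ l ∈ s, ∑ m ∈ s.erase l, Real.cot ((θ m - θ j)/2) * Real.cot ((θ m - θ l)/2)) := by
      rw [hswap]; ring
    rw [h2x, ← hcount]
    rw [← Finset.sum_sub_distrib, ← Finset.sum_sub_distrib]
    apply Finset.sum_congr rfl
    intro l hl
    rw [← Finset.sum_sub_distrib, ← Finset.sum_sub_distrib]
    apply Finset.sum_congr rfl
    intro m hm
    have := hid l hl m hm
    linarith
  linear_combination hA + hpair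
end

section
/- Let $0<\kappa<4\alpha$, $\mu\in\mathbb{R}$, $X_0\in(0,2\pi)$, and define $f(\theta) = \frac{2}{\kappa}\int_\theta^{X_0}\int_y^{X_0}\frac{\sin(u/2)^{4\alpha/\kappa}e^{-2\mu u/\kappa}}{\sin(y/2)^{4\alpha/\kappa}e^{-2\mu y/\kappa}}\,du\,dy$. Then $f\ge 0$ on $(0,2\pi)$, $f$ satisfies the ODE $\frac{\kappa}{2}f''(\theta) + f'(\theta)(\alpha\cot(\theta/2)-\mu) - 1 = 0$ with $f(X_0)=0$, $f'(X_0)=0$, and for $0<\epsilon<X_0$, $f(\epsilon)\ge \frac{2}{4\alpha+\kappa}e^{-8|\mu|\pi/\kappa}\left(\frac{2\sin(X_0/2)}{X_0}\right)^{4\alpha/\kappa}\left(\frac{\kappa X_0^{4\alpha/\kappa+1}}{4\alpha-\kappa}\epsilon^{1-4\alpha/\kappa} - \frac{4\alpha+\kappa}{8\alpha-2\kappa}X_0^2\right)$. -/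
open intervalIntegral Real

namespace RBaux

noncomputable def H (α μ κ u : ℝ) : ℝ :=
  Real.sin (u / 2) ^ (4 * α / κ) * Real.exp (-2 * μ * u / κ)

noncomputable def F (α μ κ X0 y : ℝ) : ℝ := ∫ u in y..X0, H α μ κ u

noncomputable def G (α μ κ X0 y : ℝ) : ℝ := F α μ κ X0 y / H α μ κ y

variable {α μ κ X0 : ℝ}

lemma r_pos (hκ : 0 < κ) (hα : 0 < α) : 0 < 4 * α / κ := by positivity

lemma H_cont (hκ : 0 < κ) (hα : 0 < α) : Continuous (H α μ κ) := by
  apply Continuous.mul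
  · exact (Real.continuous_sin.comp (continuous_id.div_const 2)).rpow_const
      (fun x => Or.inr (r_pos hκ hα).le)
  · exact Real.continuous_exp.comp (by continuity)

lemma H_pos (hκ : 0 < κ) (hα : 0 < α) {x : ℝ} (hx : x ∈ Set.Ioo (0:ℝ) (2 * Real.pi)) :
    0 < H α μ κ x := by
  have hs : 0 < Real.sin (x / 2) :=
    Real.sin_pos_of_pos_of_lt_pi (by linarith [hx.1]) (by linarith [hx.2])
  exact mul_pos (Real.rpow_pos_of_pos hs _) (Real.exp_pos _)

lemma F_hasDerivAt (hκ : 0 < κ) (hα : 0 < α) (y : ℝ) :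
    HasDerivAt (F α μ κ X0) (-(H α μ κ y)) y :=
  intervalIntegral.integral_hasDerivAt_left ((H_cont hκ hα).intervalIntegrable _ _)
    ((H_cont hκ hα).stronglyMeasurableAtFilter _ _) (H_cont hκ hα).continuousAt

lemma F_cont (hκ : 0 < κ) (hα : 0 < α) : Continuous (F α μ κ X0) :=
  continuous_iff_continuousAt.2 fun y => (F_hasDerivAt hκ hα y).continuousAt

lemma G_contOn (hκ : 0 < κ) (hα : 0 < α) :
    ContinuousOn (G α μ κ X0) (Set.Ioo (0:ℝ) (2 * Real.pi)) :=
  ((F_cont hκ hα).continuousOn).div ((H_cont hκ hα).continuousOn)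
    (fun x hx => (H_pos hκ hα hx).ne')

lemma sin_lower {X0 u : ℝ} (h1 : 0 < X0) (h2 : X0 < 2 * Real.pi) (hu0 : 0 ≤ u)
    (huX : u ≤ X0) : Real.sin (X0 / 2) / X0 * u ≤ Real.sin (u / 2) := by
  have hpi := Real.pi_pos
  have hb : u / X0 ≤ 1 := (div_le_one h1).mpr huX
  have key := strictConcaveOn_sin_Icc.concaveOn.2
    (show (0:ℝ) ∈ Set.Icc (0:ℝ) Real.pi from ⟨le_rfl, Real.pi_pos.le⟩)
    (show X0 / 2 ∈ Set.Icc (0:ℝ) Real.pi from ⟨by linarith, by linarith⟩)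
    (show (0:ℝ) ≤ 1 - u / X0 by linarith)
    (show (0:ℝ) ≤ u / X0 by positivity)
    (show (1 - u / X0) + u / X0 = 1 by ring)
  have harg : (1 - u / X0) • (0:ℝ) + (u / X0) • (X0 / 2) = u / 2 := by
    rw [smul_eq_mul, smul_eq_mul, mul_zero, zero_add, div_mul_div_comm, mul_comm u X0,
      mul_div_mul_left _ _ h1.ne']
  rw [harg] at key
  simp only [smul_eq_mul, Real.sin_zero, mul_zero, zero_add] at key
  calc Real.sin (X0 / 2) / X0 * u = u / X0 * Real.sin (X0 / 2) := by ring
  _ ≤ _ := key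

lemma H_hasDerivAt (hκ : 0 < κ) {x : ℝ}
    (hx : x ∈ Set.Ioo (0:ℝ) (2 * Real.pi)) :
    HasDerivAt (H α μ κ)
      (H α μ κ x * (2 * α / κ * Real.cot (x / 2) - 2 * μ / κ)) x := by
  have hs : 0 < Real.sin (x / 2) :=
    Real.sin_pos_of_pos_of_lt_pi (by linarith [hx.1]) (by linarith [hx.2])
  have d1 : HasDerivAt (fun u : ℝ => u / 2) (1 / 2) x := by
    simpa using (hasDerivAt_id x).div_const 2
  have dsin : HasDerivAt (fun u : ℝ => Real.sin (u / 2)) (Real.cos (x / 2) * (1 / 2)) x :=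
    by have := (Real.hasDerivAt_sin (x / 2)).comp x d1; exact this
  have drpow : HasDerivAt (fun t : ℝ => t ^ (4 * α / κ))
      (4 * α / κ * Real.sin (x / 2) ^ (4 * α / κ - 1)) (Real.sin (x / 2)) :=
    Real.hasDerivAt_rpow_const (Or.inl hs.ne')
  have dpow : HasDerivAt (fun u : ℝ => Real.sin (u / 2) ^ (4 * α / κ))
      (4 * α / κ * Real.sin (x / 2) ^ (4 * α / κ - 1) * (Real.cos (x / 2) * (1 / 2))) x :=
    by have := drpow.comp x dsin; exact this
  have dlin : HasDerivAt (fun u : ℝ => -2 * μ * u / κ) (-2 * μ / κ) x := by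
    simpa using ((hasDerivAt_id x).const_mul (-2 * μ)).div_const κ
  have dexp : HasDerivAt (fun u : ℝ => Real.exp (-2 * μ * u / κ))
      (Real.exp (-2 * μ * x / κ) * (-2 * μ / κ)) x := dlin.exp
  have key := dpow.mul dexp
  have : HasDerivAt (H α μ κ)
      (4 * α / κ * Real.sin (x / 2) ^ (4 * α / κ - 1) * (Real.cos (x / 2) * (1 / 2))
          * Real.exp (-2 * μ * x / κ)
        + Real.sin (x / 2) ^ (4 * α / κ)
          * (Real.exp (-2 * μ * x / κ) * (-2 * μ / κ))) x := key
  convert this using 1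
  rw [H, Real.cot_eq_cos_div_sin, Real.rpow_sub_one hs.ne']
  field_simp
  ring

lemma G_hasDerivAt (hκ : 0 < κ) (hα : 0 < α) {x : ℝ}
    (hx : x ∈ Set.Ioo (0:ℝ) (2 * Real.pi)) :
    HasDerivAt (G α μ κ X0)
      (-1 - G α μ κ X0 x * (2 * α / κ * Real.cot (x / 2) - 2 * μ / κ)) x := by
  have hne := (H_pos (α := α) (μ := μ) hκ hα hx).ne'
  have key := (F_hasDerivAt (X0 := X0) (μ := μ) hκ hα x).div (H_hasDerivAt hκ hx) hne
  refine key.congr_deriv ?_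
  rw [G]
  field_simp

end RBaux
open intervalIntegral Real RBaux

set_option maxHeartbeats 1000000 in
/-- Properties of the auxiliary function `f` for the radial Bessel-type estimate:
nonnegativity on `(0, 2π)`, the ODE `(κ/2) f'' + f'(α cot(θ/2) - μ) - 1 = 0` with
`f(X₀) = 0`, `f'(X₀) = 0`, and the lower bound for `f(ε)` when `0 < ε < X₀`. -/
theorem radial_Bessel_auxiliary_function (κ α μ X0 : ℝ)
    (hκ : 0 < κ) (hκα : κ < 4 * α) (hα : 0 < α)
    (hX0 : X0 ∈ Set.Ioo (0 : ℝ) (2 * Real.pi))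
    (f : ℝ → ℝ)
    (hf : ∀ θ : ℝ, f θ = (2 / κ) * ∫ y in θ..X0, ∫ u in y..X0,
        (Real.sin (u / 2) ^ (4 * α / κ) * Real.exp (-2 * μ * u / κ))
          / (Real.sin (y / 2) ^ (4 * α / κ) * Real.exp (-2 * μ * y / κ))) :
    (∀ θ ∈ Set.Ioo (0 : ℝ) (2 * Real.pi), 0 ≤ f θ) ∧
    f X0 = 0 ∧ deriv f X0 = 0 ∧
    (∀ θ ∈ Set.Ioo (0 : ℝ) (2 * Real.pi),
      κ / 2 * deriv (deriv f) θ + deriv f θ * (α * Real.cot (θ / 2) - μ) - 1 = 0) ∧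
    (∀ ε : ℝ, 0 < ε → ε < X0 →
      (2 / (4 * α + κ)) * Real.exp (-8 * |μ| * Real.pi / κ)
          * (2 * Real.sin (X0 / 2) / X0) ^ (4 * α / κ)
          * (κ * X0 ^ (4 * α / κ + 1) / (4 * α - κ) * ε ^ (1 - 4 * α / κ)
              - (4 * α + κ) / (8 * α - 2 * κ) * X0 ^ 2)
        ≤ f ε) := by
  obtain ⟨hX0p, hX0lt⟩ := hX0
  have hπ := Real.pi_pos
  have hX0s : X0 ∈ Set.Ioo (0:ℝ) (2 * Real.pi) := ⟨hX0p, hX0lt⟩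
  have hsOpen : IsOpen (Set.Ioo (0:ℝ) (2 * Real.pi)) := isOpen_Ioo
  -- rewrite f in terms of G
  have hfg : ∀ θ, f θ = (2 / κ) * ∫ y in θ..X0, G α μ κ X0 y := by
    intro θ
    rw [hf θ]
    simp only [intervalIntegral.integral_div, G, F, H]
  -- f X0 = 0
  have hfX0 : f X0 = 0 := by rw [hfg X0, intervalIntegral.integral_same, mul_zero]
  -- derivative of f on the interval
  have hf' : ∀ θ ∈ Set.Ioo (0:ℝ) (2 * Real.pi),
      HasDerivAt f (2 / κ * -(G α μ κ X0 θ)) θ := by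
    intro θ hθ
    have hsub : Set.uIcc θ X0 ⊆ Set.Ioo (0:ℝ) (2 * Real.pi) :=
      Set.ordConnected_Ioo.uIcc_subset hθ hX0s
    have hint : IntervalIntegrable (G α μ κ X0) MeasureTheory.volume θ X0 :=
      ((G_contOn hκ hα).mono hsub).intervalIntegrable
    have hmeas := (G_contOn (μ := μ) (X0 := X0) hκ hα).stronglyMeasurableAtFilter (μ := MeasureTheory.volume)
      hsOpen θ hθ
    have hcont : ContinuousAt (G α μ κ X0) θ :=
      (G_contOn hκ hα).continuousAt (hsOpen.mem_nhds hθ)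
    have key := (intervalIntegral.integral_hasDerivAt_left hint hmeas hcont).const_mul (2 / κ)
    have feq : f = fun t => (2 / κ) * ∫ y in t..X0, G α μ κ X0 y := funext hfg
    rw [feq]
    exact key
  have hderiv : ∀ θ ∈ Set.Ioo (0:ℝ) (2 * Real.pi),
      deriv f θ = 2 / κ * -(G α μ κ X0 θ) := fun θ hθ => (hf' θ hθ).deriv
  -- deriv f X0 = 0
  have hGX0 : G α μ κ X0 X0 = 0 := by
    rw [G, F, intervalIntegral.integral_same, zero_div]
  have hdfX0 : deriv f X0 = 0 := by rw [hderiv X0 hX0s, hGX0]; ring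
  -- second derivative and ODE
  have hODE : ∀ θ ∈ Set.Ioo (0:ℝ) (2 * Real.pi),
      κ / 2 * deriv (deriv f) θ + deriv f θ * (α * Real.cot (θ / 2) - μ) - 1 = 0 := by
    intro θ hθ
    have hev : deriv f =ᶠ[nhds θ] fun t => 2 / κ * -(G α μ κ X0 t) := by
      filter_upwards [hsOpen.mem_nhds hθ] with t ht
      exact hderiv t ht
    have hG' := ((G_hasDerivAt (X0 := X0) (μ := μ) hκ hα hθ).neg).const_mul (2 / κ)
    have h2 : deriv (deriv f) θ
        = 2 / κ * -(-1 - G α μ κ X0 θ * (2 * α / κ * Real.cot (θ / 2) - 2 * μ / κ)) := by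
      rw [hev.deriv_eq]
      exact hG'.deriv
    rw [h2, hderiv θ hθ]
    field_simp
    ring
  -- nonnegativity
  have hnonneg : ∀ θ ∈ Set.Ioo (0:ℝ) (2 * Real.pi), 0 ≤ f θ := by
    intro θ hθ
    have hIccsub : ∀ {a b : ℝ}, a ∈ Set.Ioo (0:ℝ) (2*Real.pi) → b ∈ Set.Ioo (0:ℝ) (2*Real.pi) →
        Set.Icc a b ⊆ Set.Ioo (0:ℝ) (2 * Real.pi) := fun ha hb => Set.ordConnected_Ioo.out ha hb
    rw [hfg θ]
    rcases le_total θ X0 with hc | hc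
    · refine mul_nonneg (by positivity) (intervalIntegral.integral_nonneg hc fun y hy => ?_)
      have hys := hIccsub hθ hX0s hy
      refine div_nonneg (intervalIntegral.integral_nonneg hy.2 fun u hu => ?_)
        (H_pos hκ hα hys).le
      exact (H_pos hκ hα (hIccsub hys hX0s hu)).le
    · rw [intervalIntegral.integral_symm]
      have : 0 ≤ ∫ y in X0..θ, -G α μ κ X0 y := by
        refine intervalIntegral.integral_nonneg hc fun y hy => ?_
        have hys := hIccsub hX0s hθ hy
        rw [neg_nonneg, G]
        apply div_nonpos_of_nonpos_of_nonneg _ (H_pos hκ hα hys).le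
        rw [F, intervalIntegral.integral_symm, neg_nonpos]
        refine intervalIntegral.integral_nonneg hy.1 fun u hu => ?_
        exact (H_pos hκ hα (hIccsub hX0s hys hu)).le
      rw [intervalIntegral.integral_neg] at this
      have h1 : ∫ y in X0..θ, G α μ κ X0 y ≤ 0 := by linarith
      have h2 : (0:ℝ) < 2 / κ := by positivity
      nlinarith
  refine ⟨hnonneg, hfX0, hdfX0, hODE, ?_⟩
  -- lower bound
  intro ε hε0 hεX0
  have hεs : ε ∈ Set.Ioo (0:ℝ) (2 * Real.pi) := ⟨hε0, by linarith⟩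
  set r : ℝ := 4 * α / κ with hrdef
  have hr1 : 1 < r := by rw [hrdef]; exact (one_lt_div hκ).mpr hκα
  have hr0 : 0 < r := by linarith
  have hsinX0 : 0 < Real.sin (X0 / 2) :=
    Real.sin_pos_of_pos_of_lt_pi (by linarith) (by linarith)
  set E : ℝ := Real.exp (-8 * |μ| * Real.pi / κ) with hEdef
  set C : ℝ := E * (2 * Real.sin (X0 / 2) / X0) ^ r with hCdef
  have hEpos : 0 < E := Real.exp_pos _
  have hpwpos : 0 < (2 * Real.sin (X0 / 2) / X0) ^ r :=
    Real.rpow_pos_of_pos (by positivity) _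
  have hCpos : 0 < C := mul_pos hEpos hpwpos
  -- pointwise lower bound on G
  have key1 : ∀ y ∈ Set.Icc ε X0,
      C * y ^ (-r) * (X0 ^ (r+1) - y ^ (r+1)) / (r+1) ≤ G α μ κ X0 y := by
    intro y hy
    have hy0 : 0 < y := lt_of_lt_of_le hε0 hy.1
    have hyX : y ≤ X0 := hy.2
    have hys : y ∈ Set.Ioo (0:ℝ) (2 * Real.pi) := ⟨hy0, by linarith⟩
    have hHy : 0 < H α μ κ y := H_pos hκ hα hys
    set K : ℝ := (Real.sin (X0/2)/X0) ^ r * (E * Real.exp (-2*μ*y/κ)) with hKdef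
    have hKpos : 0 < K := by
      rw [hKdef]
      exact mul_pos (Real.rpow_pos_of_pos (by positivity) _) (mul_pos hEpos (Real.exp_pos _))
    have stepa : ∀ u ∈ Set.Icc y X0, K * u ^ r ≤ H α μ κ u := by
      intro u hu
      have hu0 : 0 < u := lt_of_lt_of_le hy0 hu.1
      have hsinu : 0 < Real.sin (u/2) :=
        Real.sin_pos_of_pos_of_lt_pi (by linarith) (by linarith [hu.2])
      have hsinb : (Real.sin (X0/2)/X0) ^ r * u ^ r ≤ Real.sin (u/2) ^ r := by
        rw [← Real.mul_rpow (by positivity) hu0.le]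
        exact Real.rpow_le_rpow (by positivity)
          (sin_lower hX0p hX0lt hu0.le hu.2) hr0.le
      have hexpb : E * Real.exp (-2*μ*y/κ) ≤ Real.exp (-2*μ*u/κ) := by
        rw [hEdef, ← Real.exp_add]
        apply Real.exp_le_exp.mpr
        rw [← add_div, div_le_div_iff₀ hκ hκ]
        have h1 : μ * (u - y) ≤ |μ| * (u - y) :=
          mul_le_mul_of_nonneg_right (le_abs_self μ) (by linarith [hu.1])
        have h2 : |μ| * (u - y) ≤ |μ| * (2 * Real.pi) :=
          mul_le_mul_of_nonneg_left (by linarith [hu.2]) (abs_nonneg μ)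
        have h3 : 0 ≤ |μ| * Real.pi := mul_nonneg (abs_nonneg μ) hπ.le
        nlinarith [hκ]
      calc K * u ^ r
          = ((Real.sin (X0/2)/X0) ^ r * u ^ r) * (E * Real.exp (-2*μ*y/κ)) := by
            rw [hKdef]; ring
        _ ≤ Real.sin (u/2) ^ r * Real.exp (-2*μ*u/κ) :=
            mul_le_mul hsinb hexpb (by positivity) (Real.rpow_nonneg hsinu.le _)
        _ = H α μ κ u := by rw [hrdef]; rfl
    have hcont2 : Continuous (fun u : ℝ => K * u ^ r) :=
      continuous_const.mul (continuous_id.rpow_const fun x => Or.inr hr0.le)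
    have stepb : K * ((X0 ^ (r+1) - y ^ (r+1)) / (r+1)) ≤ F α μ κ X0 y := by
      have hmono : (∫ u in y..X0, K * u ^ r) ≤ ∫ u in y..X0, H α μ κ u :=
        intervalIntegral.integral_mono_on hyX
          (hcont2.intervalIntegrable y X0) ((H_cont hκ hα).intervalIntegrable y X0) stepa
      calc K * ((X0 ^ (r+1) - y ^ (r+1)) / (r+1)) = ∫ u in y..X0, K * u ^ r := by
            rw [intervalIntegral.integral_const_mul, integral_rpow (Or.inl (by linarith))]
        _ ≤ _ := hmono
    have hHyle : H α μ κ y ≤ (y/2) ^ r * Real.exp (-2*μ*y/κ) := by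
      have hsiny : 0 < Real.sin (y/2) :=
        Real.sin_pos_of_pos_of_lt_pi (by linarith) (by linarith)
      have hb : Real.sin (y/2) ^ r ≤ (y/2) ^ r :=
        Real.rpow_le_rpow hsiny.le (Real.sin_le (by positivity)) hr0.le
      calc H α μ κ y = Real.sin (y/2) ^ r * Real.exp (-2*μ*y/κ) := by rw [hrdef]; rfl
        _ ≤ _ := mul_le_mul_of_nonneg_right hb (Real.exp_pos _).le
    have hNnonneg : 0 ≤ K * ((X0 ^ (r+1) - y ^ (r+1)) / (r+1)) := by
      have hm : y ^ (r+1) ≤ X0 ^ (r+1) := Real.rpow_le_rpow hy0.le hyX (by linarith)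
      exact mul_nonneg hKpos.le (div_nonneg (by linarith) (by linarith))
    have hdpos : 0 < (y/2) ^ r * Real.exp (-2*μ*y/κ) :=
      mul_pos (Real.rpow_pos_of_pos (by positivity) _) (Real.exp_pos _)
    have hchain1 : K * ((X0 ^ (r+1) - y ^ (r+1)) / (r+1)) / ((y/2) ^ r * Real.exp (-2*μ*y/κ))
        ≤ G α μ κ X0 y := by
      calc K * ((X0 ^ (r+1) - y ^ (r+1)) / (r+1)) / ((y/2) ^ r * Real.exp (-2*μ*y/κ))
          ≤ K * ((X0 ^ (r+1) - y ^ (r+1)) / (r+1)) / H α μ κ y :=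
            div_le_div_of_nonneg_left hNnonneg hHy hHyle
        _ ≤ F α μ κ X0 y / H α μ κ y := (div_le_div_iff_of_pos_right hHy).mpr stepb
        _ = G α μ κ X0 y := rfl
    refine le_trans (le_of_eq ?_) hchain1
    have hrel : (2 * Real.sin (X0/2) / X0) ^ r * y ^ (-r)
        = (Real.sin (X0/2)/X0) ^ r / ((y/2) ^ r) := by
      rw [Real.rpow_neg hy0.le, ← Real.inv_rpow hy0.le,
        ← Real.mul_rpow (by positivity) (by positivity),
        ← Real.div_rpow (by positivity) (by positivity)]
      congr 1
      field_simp
    have hepos := Real.exp_pos (-2*μ*y/κ)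
    have hyrpos : (0:ℝ) < (y/2) ^ r := Real.rpow_pos_of_pos (by positivity) _
    rw [hCdef, hKdef]
    rw [show E * (2 * Real.sin (X0/2) / X0) ^ r * y ^ (-r)
        = E * ((Real.sin (X0/2)/X0) ^ r / ((y/2) ^ r)) from by rw [mul_assoc, hrel]]
    field_simp
  -- outer integral comparison and computation
  have hεle : ε ≤ X0 := hεX0.le
  have huIcc : Set.uIcc ε X0 = Set.Icc ε X0 := Set.uIcc_of_le hεle
  have hsub2 : Set.Icc ε X0 ⊆ Set.Ioo (0:ℝ) (2 * Real.pi) := fun x hx =>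
    ⟨lt_of_lt_of_le hε0 hx.1, lt_of_le_of_lt hx.2 hX0lt⟩
  have hrm : ContinuousOn (fun y : ℝ => y ^ (-r)) (Set.uIcc ε X0) := by
    rw [huIcc]
    intro x hx
    exact (Real.continuousAt_rpow_const x (-r)
      (Or.inl (ne_of_gt (lt_of_lt_of_le hε0 hx.1)))).continuousWithinAt
  have hψcont : ContinuousOn
      (fun y : ℝ => C * y ^ (-r) * (X0 ^ (r+1) - y ^ (r+1)) / (r+1)) (Set.uIcc ε X0) := by
    apply ContinuousOn.div_const
    exact ((continuousOn_const.mul hrm).mul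
      (continuous_const.sub (continuous_id.rpow_const fun x => Or.inr (by linarith))).continuousOn)
  have hGint : IntervalIntegrable (G α μ κ X0) MeasureTheory.volume ε X0 :=
    ((G_contOn hκ hα).mono (huIcc ▸ hsub2)).intervalIntegrable
  have houter : (∫ y in ε..X0, C * y ^ (-r) * (X0 ^ (r+1) - y ^ (r+1)) / (r+1))
      ≤ ∫ y in ε..X0, G α μ κ X0 y :=
    intervalIntegral.integral_mono_on hεle hψcont.intervalIntegrable hGint key1
  -- compute the ψ integral
  have hψeq : Set.EqOn (fun y : ℝ => C * y ^ (-r) * (X0 ^ (r+1) - y ^ (r+1)) / (r+1))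
      (fun y : ℝ => C/(r+1) * (X0 ^ (r+1) * y ^ (-r) - y)) (Set.uIcc ε X0) := by
    intro y hy
    rw [huIcc] at hy
    have hy0 : 0 < y := lt_of_lt_of_le hε0 hy.1
    have h2 : y ^ (-r) * y ^ (r+1) = y := by
      rw [← Real.rpow_add hy0]
      norm_num
    simp only
    linear_combination (-(C/(r+1))) * h2
  have hint1 : IntervalIntegrable (fun y : ℝ => X0 ^ (r+1) * y ^ (-r))
      MeasureTheory.volume ε X0 := (continuousOn_const.mul hrm).intervalIntegrable
  have hint2 : IntervalIntegrable (fun y : ℝ => y) MeasureTheory.volume ε X0 :=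
    continuous_id.intervalIntegrable ε X0
  have hnot0 : (0:ℝ) ∉ Set.uIcc ε X0 := by
    rw [huIcc]
    intro hc
    exact absurd hc.1 (not_le.mpr hε0)
  have hcalc : (∫ y in ε..X0, C * y ^ (-r) * (X0 ^ (r+1) - y ^ (r+1)) / (r+1))
      = C/(r+1) * (X0 ^ (r+1) * ((X0 ^ (-r+1) - ε ^ (-r+1))/(-r+1)) - (X0^2 - ε^2)/2) := by
    rw [intervalIntegral.integral_congr hψeq, intervalIntegral.integral_const_mul,
      intervalIntegral.integral_sub hint1 hint2, intervalIntegral.integral_const_mul,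
      integral_rpow (Or.inr ⟨by intro hc; linarith, hnot0⟩),
      integral_id]
  have hlow : (2/κ) * (C/(r+1) * (X0 ^ (r+1) * ((X0 ^ (-r+1) - ε ^ (-r+1))/(-r+1))
      - (X0^2 - ε^2)/2)) ≤ f ε := by
    rw [hfg ε]
    apply mul_le_mul_of_nonneg_left _ (by positivity)
    rw [← hcalc]
    exact houter
  refine le_trans ?_ hlow
  -- final algebra
  have hX2 : X0 ^ (r+1) * X0 ^ (-r+1) = X0 ^ 2 := by
    rw [← Real.rpow_add hX0p, show (r+1) + (-r+1) = ((2:ℕ):ℝ) by push_cast; ring,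
      Real.rpow_natCast]
  have heε : ε ^ (1 - r) = ε ^ (-r + 1) := by congr 1; ring
  rw [hCdef, heε]
  set a : ℝ := X0 ^ (r+1) with hadef
  set b : ℝ := ε ^ (-r+1) with hbdef
  set d : ℝ := X0 ^ (-r+1) with hddef
  set Q : ℝ := (2 * Real.sin (X0 / 2) / X0) ^ r with hQdef
  have hkey : 2/(4*α+κ) * (κ * a/(4*α-κ) * b - (4*α+κ)/(8*α-2*κ) * X0^2)
      ≤ 2/κ * (1/(r+1) * (a * ((d - b)/(-r+1)) - (X0^2 - ε^2)/2)) := by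
    rw [← hX2]
    have hne1 : κ ≠ 0 := hκ.ne'
    have hne2 : 4*α + κ ≠ 0 := by positivity
    have hne3 : 4*α - κ ≠ 0 := by intro hc; linarith
    have hne4 : 8*α - 2*κ ≠ 0 := by intro hc; linarith
    have hne3' : κ - 4*α ≠ 0 := by intro hc; linarith
    have hne3'' : κ - α * 4 ≠ 0 := by intro hc; linarith
    have hne5 : r + 1 ≠ 0 := by intro hc; linarith
    have hne6 : -r + 1 ≠ 0 := by intro hc; linarith
    have hdiff : 2/κ * (1/(r+1) * (a * ((d - b)/(-r+1)) - (a * d - ε^2)/2))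
        - 2/(4*α+κ) * (κ * a/(4*α-κ) * b - (4*α+κ)/(8*α-2*κ) * (a * d))
        = 2/(4*α+κ) * (ε^2/2) := by
      rw [hrdef] at hne5 hne6 ⊢
      rw [show -(4*α/κ) + 1 = (κ - 4*α)/κ by field_simp; ring,
          show 4*α/κ + 1 = (4*α+κ)/κ by field_simp,
          one_div_div, div_div_eq_mul_div]
      have hk : κ - 4*α ≠ 0 := by intro hc; linarith
      rw [show (8*α - 2*κ) = 2*(4*α-κ) by ring]
      field_simp
      ring
    have hc0 : 0 ≤ 2/(4*α+κ) * (ε^2/2) := by positivity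
    linarith [hdiff, hc0]
  calc 2 / (4*α+κ) * E * Q * (κ * a / (4*α-κ) * b - (4*α+κ)/(8*α-2*κ) * X0^2)
      = (E * Q) * (2/(4*α+κ) * (κ * a/(4*α-κ) * b - (4*α+κ)/(8*α-2*κ) * X0^2)) := by ring
    _ ≤ (E * Q) * (2/κ * (1/(r+1) * (a * ((d - b)/(-r+1)) - (X0^2 - ε^2)/2))) :=
        mul_le_mul_of_nonneg_left hkey (mul_pos hEpos hpwpos).le
    _ = 2/κ * (E * Q/(r+1) * (a * ((d - b)/(-r+1)) - (X0^2 - ε^2)/2)) := by ring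
end
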